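/- Let H be a tree-based hierarchy with canonical aggregation matrix A, positive initial predictions ŷ, and top-heavy weight matrices W(M). Then for every constraint index k (1 ≤ k ≤ K), the ratio λ_k(M)/M^{H(p_k)} tends to 0 as M → ∞. -/

import Mathlib

open Matrix Filter Topology

/-- A tree-based hierarchy in canonical form on items `Fin N` with `K` constraints.
Constraint `k` has parent item `parent k` and nonempty child set `children k`;
each item is a child in at most one constraint, and the height function satisfies
`H(c) = H(p_k) - 1` (equivalently `H(p_k) = H(c) + 1`) for every child `c` of `p_k`. -/
structure TreeHierarchy (N K : ℕ) where
  parent : Fin K → Fin N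
  children : Fin K → Finset (Fin N)
  children_nonempty : ∀ k, (children k).Nonempty
  parent_notMem : ∀ k, parent k ∉ children k
  child_unique : ∀ k j : Fin K, ∀ n : Fin N, n ∈ children k → n ∈ children j → k = j
  height : Fin N → ℕ
  height_child : ∀ k : Fin K, ∀ c ∈ children k, height (parent k) = height c + 1

variable {N K : ℕ}

/-- The canonical aggregation matrix of a tree-based hierarchy:
`A k (p_k) = 1`, `A k c = -1` for `c ∈ C_k`, and `0` otherwise. -/
noncomputable def aggMatrix (T : TreeHierarchy N K) : Matrix (Fin K) (Fin N) ℝ :=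
  fun k n => if n = T.parent k then 1 else if n ∈ T.children k then -1 else 0

/-- The top-heavy weight matrix: diagonal with entries `w_n(M) = M^(H n) / yhat n`. -/
noncomputable def topW (T : TreeHierarchy N K) (yhat : Fin N → ℝ) (M : ℝ) :
    Matrix (Fin N) (Fin N) ℝ :=
  Matrix.diagonal fun n => M ^ T.height n / yhat n

/-- `λ(M) = (A W(M)⁻¹ Aᵀ)⁻¹ A ŷ`. -/
noncomputable def lamTop (T : TreeHierarchy N K) (yhat : Fin N → ℝ) (M : ℝ) : Fin K → ℝ :=
  (aggMatrix T * (topW T yhat M)⁻¹ * (aggMatrix T)ᵀ)⁻¹.mulVec ((aggMatrix T).mulVec yhat)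

-- Auxiliary matrices
noncomputable def auxC1 (T : TreeHierarchy N K) (yhat : Fin N → ℝ) : Matrix (Fin K) (Fin K) ℝ :=
  fun k j => if k = j then ∑ c ∈ T.children k, yhat c
    else if T.parent k ∈ T.children j then -yhat (T.parent k) else 0

noncomputable def auxC0 (T : TreeHierarchy N K) (yhat : Fin N → ℝ) : Matrix (Fin K) (Fin K) ℝ :=
  fun k j => if k = j then yhat (T.parent k)
    else if T.parent j ∈ T.children k then -yhat (T.parent j)
    else if T.parent k = T.parent j then yhat (T.parent k) else 0

lemma aux_not_both (T : TreeHierarchy N K) {k j : Fin K}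
    (h1 : T.parent k ∈ T.children j) (h2 : T.parent j ∈ T.children k) : False := by
  have a1 := T.height_child j _ h1
  have a2 := T.height_child k _ h2
  omega

lemma auxC1_bt (T : TreeHierarchy N K) (yhat : Fin N → ℝ) :
    (auxC1 T yhat).BlockTriangular (fun k => T.height (T.parent k)) := by
  intro i j hlt
  have hlt' : T.height (T.parent j) < T.height (T.parent i) := hlt
  have hij : i ≠ j := by rintro rfl; exact absurd hlt' (lt_irrefl _)
  unfold auxC1
  rw [if_neg hij, if_neg]
  intro hmem
  have := T.height_child j _ hmem
  omega

lemma auxC1_det_pos (T : TreeHierarchy N K) (yhat : Fin N → ℝ) (hy : ∀ n, 0 < yhat n) :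
    0 < (auxC1 T yhat).det := by
  rw [(auxC1_bt T yhat).det]
  refine Finset.prod_pos fun a _ => ?_
  have hblock : (auxC1 T yhat).toSquareBlock (fun k => T.height (T.parent k)) a =
      Matrix.diagonal (fun k : {i : Fin K // T.height (T.parent i) = a} =>
        ∑ c ∈ T.children k.1, yhat c) := by
    ext ⟨i, hi⟩ ⟨j, hj⟩
    have he : ((auxC1 T yhat).toSquareBlock (fun k => T.height (T.parent k)) a) ⟨i, hi⟩ ⟨j, hj⟩
        = auxC1 T yhat i j := rfl
    rw [he]
    by_cases hij : i = j
    · subst hij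
      have : (⟨i, hi⟩ : {i : Fin K // T.height (T.parent i) = a}) = ⟨i, hi⟩ := rfl
      rw [Matrix.diagonal_apply_eq]
      unfold auxC1
      rw [if_pos rfl]
    · have hne : (⟨i, hi⟩ : {i : Fin K // T.height (T.parent i) = a}) ≠ ⟨j, hj⟩ := by
        simpa using hij
      rw [Matrix.diagonal_apply_ne _ hne]
      unfold auxC1
      rw [if_neg hij, if_neg]
      intro hmem
      have := T.height_child j _ hmem
      omega
  rw [hblock, Matrix.det_diagonal]
  refine Finset.prod_pos fun b _ => ?_
  exact Finset.sum_pos (fun c _ => hy c) (T.children_nonempty b.1)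

lemma aux_key (T : TreeHierarchy N K) (yhat : Fin N → ℝ) (hy : ∀ n, 0 < yhat n)
    (M : ℝ) (hM : 0 < M) :
    aggMatrix T * (topW T yhat M)⁻¹ * (aggMatrix T)ᵀ *
      Matrix.diagonal (fun j => M ^ T.height (T.parent j)) =
    M • auxC1 T yhat + auxC0 T yhat := by
  have hMne : M ≠ 0 := hM.ne'
  have hpow : ∀ n : ℕ, (M : ℝ) ^ n ≠ 0 := fun n => pow_ne_zero n hMne
  have hW : (topW T yhat M)⁻¹ =
      Matrix.diagonal (fun n => yhat n * (M ^ T.height n)⁻¹) := by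
    refine Matrix.inv_eq_right_inv ?_
    have hfun : (fun n => M ^ T.height n / yhat n * (yhat n * (M ^ T.height n)⁻¹))
        = fun _ : Fin N => (1 : ℝ) := by
      funext n
      have h1 : yhat n ≠ 0 := (hy n).ne'
      have h2 : M ^ T.height n ≠ 0 := pow_ne_zero _ hMne
      field_simp
    rw [topW, Matrix.diagonal_mul_diagonal, hfun, Matrix.diagonal_one]
  rw [hW]
  ext k j
  rw [Matrix.mul_diagonal, Matrix.mul_apply]
  simp only [Matrix.mul_diagonal, Matrix.transpose_apply]
  set d : Fin N → ℝ := fun n => yhat n * (M ^ T.height n)⁻¹ with hd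
  have hAk : ∀ n, aggMatrix T k n * d n * aggMatrix T j n =
      (if n = T.parent k then 1 else if n ∈ T.children k then -1 else 0) * d n *
        aggMatrix T j n := fun n => rfl
  -- restrict the sum to the support of row k
  have hsupp : ∑ n, aggMatrix T k n * d n * aggMatrix T j n =
      aggMatrix T k (T.parent k) * d (T.parent k) * aggMatrix T j (T.parent k) +
        ∑ c ∈ T.children k, aggMatrix T k c * d c * aggMatrix T j c := by
    have hsub : ∑ n ∈ insert (T.parent k) (T.children k),
        aggMatrix T k n * d n * aggMatrix T j n
        = ∑ n, aggMatrix T k n * d n * aggMatrix T j n := by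
      refine Finset.sum_subset (Finset.subset_univ _) fun n _ hn => ?_
      simp only [Finset.mem_insert] at hn
      push_neg at hn
      have : aggMatrix T k n = 0 := by
        unfold aggMatrix
        rw [if_neg hn.1, if_neg hn.2]
      rw [this, zero_mul, zero_mul]
    rw [← hsub, Finset.sum_insert (T.parent_notMem k)]
  have hAkp : aggMatrix T k (T.parent k) = 1 := by unfold aggMatrix; rw [if_pos rfl]
  have hAkc : ∀ c ∈ T.children k, aggMatrix T k c = -1 := by
    intro c hc
    unfold aggMatrix
    rw [if_neg, if_pos hc]
    rintro rfl; exact T.parent_notMem k hc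
  by_cases hkj : k = j
  · subst hkj
    have hsum : ∑ n, aggMatrix T k n * d n * aggMatrix T k n =
        d (T.parent k) + ∑ c ∈ T.children k, d c := by
      rw [hsupp, hAkp]
      congr 1
      · ring
      · refine Finset.sum_congr rfl fun c hc => ?_
        rw [hAkc c hc]; ring
    rw [hsum]
    simp only [Matrix.add_apply, Matrix.smul_apply, smul_eq_mul]
    unfold auxC1 auxC0
    rw [if_pos rfl, if_pos rfl]
    rw [add_mul, Finset.sum_mul]
    have h1 : d (T.parent k) * M ^ T.height (T.parent k) = yhat (T.parent k) := by
      rw [hd]; field_simp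
    have h2 : ∀ c ∈ T.children k, d c * M ^ T.height (T.parent k) = M * yhat c := by
      intro c hc
      rw [hd, T.height_child k c hc, pow_succ]
      field_simp
    rw [h1, Finset.sum_congr rfl h2, ← Finset.mul_sum]
    ring
  · -- k ≠ j
    have hsum : ∑ n, aggMatrix T k n * d n * aggMatrix T j n =
        d (T.parent k) * aggMatrix T j (T.parent k) +
          (if T.parent j ∈ T.children k then -d (T.parent j) else 0) := by
      rw [hsupp, hAkp, one_mul]
      congr 1
      have : ∀ c ∈ T.children k, aggMatrix T k c * d c * aggMatrix T j c =
          if c = T.parent j then -d c else 0 := by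
        intro c hc
        rw [hAkc c hc]
        unfold aggMatrix
        by_cases hcp : c = T.parent j
        · simp only [if_pos hcp]; ring
        · rw [if_neg hcp, if_neg, if_neg hcp]
          · ring
          · intro hmem; exact hkj (T.child_unique k j c hc hmem)
      rw [Finset.sum_congr rfl this, Finset.sum_ite_eq' (T.children k)]
    rw [hsum]
    simp only [Matrix.add_apply, Matrix.smul_apply, smul_eq_mul]
    unfold auxC1 auxC0
    rw [if_neg hkj, if_neg hkj]
    by_cases hpp : T.parent k = T.parent j
    · have hnc1 : T.parent k ∉ T.children j := by rw [hpp]; exact T.parent_notMem j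
      have hnc2 : T.parent j ∉ T.children k := by rw [← hpp]; exact T.parent_notMem k
      rw [if_neg hnc1, if_neg hnc2, if_pos hpp]
      have hA : aggMatrix T j (T.parent k) = 1 := by
        unfold aggMatrix; rw [if_pos hpp]
      rw [hA, if_neg hnc2]
      have hh : T.height (T.parent k) = T.height (T.parent j) := by rw [hpp]
      rw [hd]
      simp only [← hh]
      field_simp
      ring
    · by_cases hcj : T.parent k ∈ T.children j
      · have hnc2 : T.parent j ∉ T.children k := fun h => aux_not_both T hcj h
        rw [if_pos hcj, if_neg hnc2, if_neg hpp]
        have hA : aggMatrix T j (T.parent k) = -1 := by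
          unfold aggMatrix; rw [if_neg hpp, if_pos hcj]
        rw [hA, if_neg hnc2]
        have hh := T.height_child j _ hcj
        rw [hd, hh, pow_succ]
        field_simp; ring
      · rw [if_neg hcj]
        have hA : aggMatrix T j (T.parent k) = 0 := by
          unfold aggMatrix; rw [if_neg hpp, if_neg hcj]
        rw [hA]
        by_cases hjc : T.parent j ∈ T.children k
        · rw [if_pos hjc, if_pos hjc]
          have hh := T.height_child k _ hjc
          rw [hd]
          field_simp
          ring
        · rw [if_neg hjc, if_neg hjc, if_neg hpp]
          ring

lemma aux_ratio (T : TreeHierarchy N K) (yhat : Fin N → ℝ) (hy : ∀ n, 0 < yhat n)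
    (M : ℝ) (hM : 0 < M) (k : Fin K) :
    lamTop T yhat M k / M ^ T.height (T.parent k) =
      (M • auxC1 T yhat + auxC0 T yhat)⁻¹.mulVec ((aggMatrix T).mulVec yhat) k := by
  have hMne : M ≠ 0 := hM.ne'
  have hE : (Matrix.diagonal (fun j : Fin K => M ^ T.height (T.parent j)))⁻¹ =
      Matrix.diagonal (fun j : Fin K => (M ^ T.height (T.parent j))⁻¹) := by
    refine Matrix.inv_eq_right_inv ?_
    have hfun : (fun j : Fin K => M ^ T.height (T.parent j) * (M ^ T.height (T.parent j))⁻¹)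
        = fun _ : Fin K => (1 : ℝ) := by
      funext j
      exact mul_inv_cancel₀ (pow_ne_zero _ hMne)
    rw [Matrix.diagonal_mul_diagonal, hfun, Matrix.diagonal_one]
  rw [← aux_key T yhat hy M hM, Matrix.mul_inv_rev, hE, ← Matrix.mulVec_mulVec,
    Matrix.mulVec_diagonal, lamTop, div_eq_inv_mul]

lemma aux_limit (T : TreeHierarchy N K) (yhat : Fin N → ℝ) (hy : ∀ n, 0 < yhat n)
    (k : Fin K) :
    Tendsto (fun M : ℝ => lamTop T yhat M k / M ^ T.height (T.parent k)) atTop (𝓝 0) := by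
  set v := (aggMatrix T).mulVec yhat with hv
  set C1 := auxC1 T yhat with hC1
  set C0 := auxC0 T yhat with hC0
  have hdet : C1.det ≠ 0 := (auxC1_det_pos T yhat hy).ne'
  have hφ : Continuous (fun ε : ℝ => C1 + ε • C0) := by
    refine continuous_const.add ?_
    exact continuous_id.smul continuous_const
  have hd0 : (C1 + (0 : ℝ) • C0) = C1 := by simp
  have hinvcont : ContinuousAt (fun ε : ℝ => (C1 + ε • C0)⁻¹) 0 := by
    refine ContinuousAt.comp ?_ hφ.continuousAt
    refine continuousAt_matrix_inv _ ?_
    rw [hd0, Ring.inverse_eq_inv']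
    exact continuousAt_inv₀ hdet
  have hm : Continuous (fun X : Matrix (Fin K) (Fin K) ℝ => X.mulVec v k) := by
    simp only [Matrix.mulVec, dotProduct]
    exact continuous_finset_sum _ fun j _ =>
      (continuous_id.matrix_elem k j).mul continuous_const
  have hg : ContinuousAt (fun ε : ℝ => ((C1 + ε • C0)⁻¹).mulVec v k) 0 :=
    hm.continuousAt.comp hinvcont
  have h1 : Tendsto (fun M : ℝ => M⁻¹) atTop (𝓝 (0 : ℝ)) := tendsto_inv_atTop_zero
  have hzero : Tendsto
      (fun M : ℝ => M⁻¹ * ((C1 + M⁻¹ • C0)⁻¹).mulVec v k) atTop (𝓝 0) := by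
    have h2 := hg.tendsto.comp h1
    have := h1.mul h2
    simpa using this
  refine Tendsto.congr' ?_ hzero
  have hdc : ContinuousAt (fun ε : ℝ => (C1 + ε • C0).det) 0 :=
    (Continuous.matrix_det hφ).continuousAt
  have hev : ∀ᶠ ε in 𝓝 (0 : ℝ), (C1 + ε • C0).det ≠ 0 := by
    refine hdc.eventually_ne ?_
    rw [hd0]
    exact hdet
  filter_upwards [eventually_gt_atTop (0 : ℝ), h1.eventually hev] with M hM hdM
  have hMne : M ≠ 0 := hM.ne'
  have hsplit : M • C1 + C0 = M • (C1 + M⁻¹ • C0) := by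
    rw [smul_add, smul_smul, mul_inv_cancel₀ hMne, one_smul]
  haveI : Invertible M := invertibleOfNonzero hMne
  rw [aux_ratio T yhat hy M hM k, hsplit]
  have hs := Matrix.inv_smul (A := C1 + M⁻¹ • C0) M (isUnit_iff_ne_zero.mpr hdM)
  rw [hs, invOf_eq_inv, Matrix.smul_mulVec]
  simp only [Pi.smul_apply, smul_eq_mul, hv]

/-- `y(M) = ŷ - W(M)⁻¹ Aᵀ λ(M)`. -/
noncomputable def yTop (T : TreeHierarchy N K) (yhat : Fin N → ℝ) (M : ℝ) : Fin N → ℝ :=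
  yhat - ((topW T yhat M)⁻¹ * (aggMatrix T)ᵀ).mulVec (lamTop T yhat M)

/-- With top-heavy weights, `λ_k(M) / M^(H(p_k)) → 0` as `M → ∞`. -/
theorem height_lambdas_converge_zero (T : TreeHierarchy N K) (yhat : Fin N → ℝ)
    (hy : ∀ n, 0 < yhat n)
    (hinv : ∀ M : ℝ, 0 < M →
      IsUnit (aggMatrix T * (topW T yhat M)⁻¹ * (aggMatrix T)ᵀ).det)
    (k : Fin K) :
    Tendsto (fun M : ℝ => lamTop T yhat M k / M ^ T.height (T.parent k)) atTop (𝓝 0) :=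
  aux_limit T yhat hy k
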